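/- Let n ≥ 2 and let a, b, c : {1,…,n}×{1,…,n} → ℝ all be normalized, i.e. every row sum and every column sum of each of a, b, c is zero. Define f, g, h : S_n → ℝ by f(σ) = ∑_{i=1}^n a_{i,σ(i)}, g(σ) = ∑_{i=1}^n b_{i,σ(i)}, h(σ) = ∑_{i=1}^n c_{i,σ(i)}. Then (1/(n!)²)·∑_{σ,τ∈S_n} f(σ)·g(τ)·h(στ) = (1/(n−1)²)·∑_{i,j,k=1}^n b_{ij}·a_{jk}·c_{ik} (this triple sum equals the matrix inner product ⟨M_g·M_f, M_h⟩ of the coefficient matrices). -/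

import Mathlib

open Equiv Finset

abbrev Perm' (n : ℕ) := Equiv.Perm (Fin n)

abbrev PermAux (n : ℕ) := Equiv.Perm (Fin n)


lemma sumA' (m : ℕ) (i : Fin (m+1)) (u : Fin (m+1) → ℝ) :
    ∑ σ : PermAux (m+1), u (σ i) = m.factorial * ∑ p, u p := by
  have h0 : ∑ σ : PermAux (m+1), u (σ 0) = ∑ σ : PermAux (m+1), u (σ i) :=
    Fintype.sum_equiv (Equiv.mulRight (Equiv.swap 0 i)) _ _ (by
      intro σ
      simp [Equiv.Perm.mul_apply])
  rw [← h0, ← Equiv.sum_comp (Equiv.Perm.decomposeFin.symm) (fun σ => u (σ 0))]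
  simp only [Equiv.Perm.decomposeFin_symm_apply_zero, Fintype.sum_prod_type,
    Finset.sum_const, Finset.card_univ, Fintype.card_perm, Fintype.card_fin, nsmul_eq_mul]
  rw [← Finset.mul_sum, mul_comm]

lemma sumB' (m : ℕ) (i l : Fin (m+2)) (h : i ≠ l) (u v : Fin (m+2) → ℝ) :
    ∑ σ : PermAux (m+2), u (σ i) * v (σ l) =
      m.factorial * ((∑ p, u p) * (∑ q, v q) - ∑ p, u p * v p) := by
  -- build π with π 0 = i, π 1 = l
  set l₂ : Fin (m+2) := Equiv.swap 0 i l with hl2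
  have hl20 : l₂ ≠ 0 := by
    simp only [hl2, Ne, Equiv.swap_apply_eq_iff, Equiv.swap_apply_left]
    exact fun hh => h hh.symm
  set π : PermAux (m+2) := Equiv.swap 0 i * Equiv.swap 1 l₂ with hπ
  have h01 : (0 : Fin (m+2)) ≠ 1 := by
    exact fun hh => absurd (congrArg Fin.val hh) (by simp)
  have hπ0 : π 0 = i := by
    have h1 : (Equiv.swap 1 l₂) 0 = 0 :=
      Equiv.swap_apply_of_ne_of_ne h01 (Ne.symm hl20)
    simp [hπ, Equiv.Perm.mul_apply, h1]
  have hπ1 : π 1 = l := by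
    have h1 : (Equiv.swap 1 l₂) 1 = l₂ := Equiv.swap_apply_left _ _
    have h2 : Equiv.swap 0 i l₂ = l := by
      rw [hl2, Equiv.swap_apply_self]
    simp [hπ, Equiv.Perm.mul_apply, h1, h2]
  have h0 : ∑ σ : PermAux (m+2), u (σ i) * v (σ l) = ∑ σ : PermAux (m+2), u (σ 0) * v (σ 1) :=
    Fintype.sum_equiv (Equiv.mulRight π) _ _ (by
      intro σ
      simp [Equiv.Perm.mul_apply, hπ0, hπ1])
  rw [h0, ← Equiv.sum_comp (Equiv.Perm.decomposeFin.symm) (fun σ => u (σ 0) * v (σ 1))]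
  have key : ∀ p : Fin (m+2), ∑ τ : PermAux (m+1),
      v (Equiv.Perm.decomposeFin.symm (p, τ) 1) = m.factorial * ((∑ q, v q) - v p) := by
    intro p
    simp only [Equiv.Perm.decomposeFin_symm_apply_one]
    rw [sumA' m 0 (fun j => v (Equiv.swap 0 p j.succ))]
    congr 1
    have hsucc := Fin.sum_univ_succ (fun q : Fin (m+2) => v (Equiv.swap 0 p q))
    have h2 : ∑ q : Fin (m+2), v (Equiv.swap 0 p q) = ∑ q, v q :=
      Equiv.sum_comp (Equiv.swap 0 p) v
    simp only [Equiv.swap_apply_left] at hsucc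
    rw [h2] at hsucc
    linarith [hsucc]
  calc ∑ pτ : Fin (m+2) × PermAux (m+1),
        u (Equiv.Perm.decomposeFin.symm pτ 0) * v (Equiv.Perm.decomposeFin.symm pτ 1)
      = ∑ p : Fin (m+2), u p * (m.factorial * ((∑ q, v q) - v p)) := by
        rw [Fintype.sum_prod_type]
        refine Finset.sum_congr rfl fun p _ => ?_
        rw [← key p, Finset.mul_sum]
        exact Finset.sum_congr rfl fun τ _ => by
          simp [Equiv.Perm.decomposeFin_symm_apply_zero]
    _ = m.factorial * ((∑ p, u p) * (∑ q, v q) - ∑ p, u p * v p) := by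
        have hterm : ∀ p : Fin (m+2), u p * ((m.factorial : ℝ) * ((∑ q, v q) - v p)) =
            (m.factorial : ℝ) * (∑ q, v q) * u p - (m.factorial : ℝ) * (u p * v p) :=
          fun p => by ring
        rw [Finset.sum_congr rfl fun p _ => hterm p, Finset.sum_sub_distrib,
          ← Finset.mul_sum, ← Finset.mul_sum]
        ring

lemma lemC (m : ℕ) (u v : Fin (m+2) → ℝ) (hu : ∑ p, u p = 0) (i l : Fin (m+2)) :
    ∑ σ : PermAux (m+2), u (σ i) * v (σ l) =
      m.factorial * ((if l = i then ((m:ℝ)+2) else 0) - 1) * ∑ p, u p * v p := by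
  by_cases hli : l = i
  · subst hli
    rw [show (∑ σ : PermAux (m+2), u (σ l) * v (σ l))
        = ∑ σ : PermAux (m+1+1), (fun p => u p * v p) (σ l) from rfl,
      sumA' (m+1) l (fun p => u p * v p)]
    simp only [if_pos rfl]
    push_cast [Nat.factorial_succ]
    ring
  · rw [sumB' m i l (fun h => hli h.symm) u v, hu, if_neg hli]
    ring

lemma step2 (m : ℕ) (b : Fin (m+2) → Fin (m+2) → ℝ)
    (hbrow : ∀ i, ∑ j, b i j = 0) (hbcol : ∀ j, ∑ i, b i j = 0) (i k : Fin (m+2)) :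
    ∑ τ : PermAux (m+2), (∑ j, b j (τ j)) * ((if τ k = i then ((m:ℝ)+2) else 0) - 1) =
      m.factorial * ((m:ℝ)+2) * ((m:ℝ)+2) * b k i := by
  have hv : ∀ (x : ℝ) (q : Fin (m+2)),
      x * ((if q = i then ((m:ℝ)+2) else 0) - 1)
        = ((m:ℝ)+2) * (x * (if q = i then (1:ℝ) else 0)) - x := by
    intro x q; by_cases hq : q = i <;> simp [hq] <;> ring
  calc ∑ τ : PermAux (m+2), (∑ j, b j (τ j)) * ((if τ k = i then ((m:ℝ)+2) else 0) - 1)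
      = ∑ j, ∑ τ : PermAux (m+2),
          (((m:ℝ)+2) * (b j (τ j) * (if τ k = i then (1:ℝ) else 0)) - b j (τ j)) := by
        rw [Finset.sum_comm]
        refine Finset.sum_congr rfl fun τ _ => ?_
        rw [Finset.sum_mul]
        exact Finset.sum_congr rfl fun j _ => hv _ _
    _ = ∑ j, (((m:ℝ)+2) * (m.factorial * ((if k = j then ((m:ℝ)+2) else 0) - 1) * b j i)) := by
        refine Finset.sum_congr rfl fun j _ => ?_
        rw [Finset.sum_sub_distrib, ← Finset.mul_sum,
          lemC m (b j) (fun p => if p = i then (1:ℝ) else 0) (hbrow j) j k,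
          show (∑ σ : PermAux (m+2), b j (σ j)) = ∑ σ : PermAux (m+1+1), (b j) (σ j) from rfl,
          sumA' (m+1) j (b j), hbrow j]
        simp
    _ = m.factorial * ((m:ℝ)+2) * ((m:ℝ)+2) * b k i := by
        have hsplit : ∀ j : Fin (m+2),
            ((m:ℝ)+2) * ((m.factorial : ℝ) * ((if k = j then ((m:ℝ)+2) else 0) - 1) * b j i)
            = ((m:ℝ)+2) * (m.factorial : ℝ) * (if k = j then ((m:ℝ)+2) * b j i else 0)
              - ((m:ℝ)+2) * (m.factorial : ℝ) * b j i := by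
          intro j; by_cases hj : k = j <;> simp [hj] <;> ring
        rw [Finset.sum_congr rfl fun j _ => hsplit j, Finset.sum_sub_distrib,
          ← Finset.mul_sum, ← Finset.mul_sum, Finset.sum_ite_eq, if_pos (Finset.mem_univ k),
          hbcol i]
        ring


/-- Convolution formula: for linear functions `f, g, h` in normalized form with
coefficient matrices `a, b, c`,
`E_{σ,τ}[f(σ)g(τ)h(στ)] = (1/(n-1)²)·∑_{i,j,k} b_{ij}·a_{jk}·c_{ik}`. -/
theorem linear_convolution_formula (n : ℕ) (hn : 2 ≤ n)
    (a b c : Fin n → Fin n → ℝ)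
    (harow : ∀ i, ∑ j, a i j = 0) (hacol : ∀ j, ∑ i, a i j = 0)
    (hbrow : ∀ i, ∑ j, b i j = 0) (hbcol : ∀ j, ∑ i, b i j = 0)
    (hcrow : ∀ i, ∑ j, c i j = 0) (hccol : ∀ j, ∑ i, c i j = 0) :
    (∑ σ : Perm' n, ∑ τ : Perm' n,
        (∑ i, a i (σ i)) * (∑ i, b i (τ i)) * (∑ i, c i ((σ * τ) i))) /
      ((n.factorial : ℝ)) ^ 2 =
    (∑ i, ∑ j, ∑ k, b i j * a j k * c i k) / ((n : ℝ) - 1) ^ 2 := by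
  obtain ⟨m, rfl⟩ : ∃ m, n = m + 2 := ⟨n - 2, by omega⟩
  set F : ℝ := (m.factorial : ℝ) with hF
  set N : ℝ := (m:ℝ) + 2 with hN
  -- step 1 : the sigma sum for fixed tau
  have step1 : ∀ τ : Perm' (m+2),
      ∑ σ : Perm' (m+2), (∑ i, a i (σ i)) * (∑ k, c k (σ (τ k)))
        = ∑ i, ∑ k, F * ((if τ k = i then N else 0) - 1) * (∑ p, a i p * c k p) := by
    intro τ
    calc ∑ σ : Perm' (m+2), (∑ i, a i (σ i)) * (∑ k, c k (σ (τ k)))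
        = ∑ σ : Perm' (m+2), ∑ i, ∑ k, a i (σ i) * c k (σ (τ k)) := by
          exact Finset.sum_congr rfl fun σ _ => by rw [Finset.sum_mul_sum]
      _ = ∑ i, ∑ k, ∑ σ : Perm' (m+2), a i (σ i) * c k (σ (τ k)) := by
          rw [Finset.sum_comm]
          exact Finset.sum_congr rfl fun i _ => Finset.sum_comm
      _ = ∑ i, ∑ k, F * ((if τ k = i then N else 0) - 1) * (∑ p, a i p * c k p) :=
          Finset.sum_congr rfl fun i _ => Finset.sum_congr rfl fun k _ =>
            lemC m (a i) (c k) (harow i) i (τ k)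
  -- rearrange the double sum
  have hT : (∑ σ : Perm' (m+2), ∑ τ : Perm' (m+2),
        (∑ i, a i (σ i)) * (∑ i, b i (τ i)) * (∑ i, c i ((σ * τ) i)))
      = ∑ i, ∑ k, F * (∑ p, a i p * c k p) *
          (∑ τ : Perm' (m+2), (∑ j, b j (τ j)) * ((if τ k = i then N else 0) - 1)) := by
    calc (∑ σ : Perm' (m+2), ∑ τ : Perm' (m+2),
          (∑ i, a i (σ i)) * (∑ i, b i (τ i)) * (∑ i, c i ((σ * τ) i)))
        = ∑ τ : Perm' (m+2), (∑ j, b j (τ j)) *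
            (∑ σ : Perm' (m+2), (∑ i, a i (σ i)) * (∑ k, c k (σ (τ k)))) := by
          rw [Finset.sum_comm]
          refine Finset.sum_congr rfl fun τ _ => ?_
          rw [Finset.mul_sum]
          refine Finset.sum_congr rfl fun σ _ => ?_
          simp only [Equiv.Perm.mul_apply]
          ring
      _ = ∑ τ : Perm' (m+2), ∑ i, ∑ k, F * (∑ p, a i p * c k p) *
            ((∑ j, b j (τ j)) * ((if τ k = i then N else 0) - 1)) := by
          refine Finset.sum_congr rfl fun τ _ => ?_
          rw [step1 τ, Finset.mul_sum]
          refine Finset.sum_congr rfl fun i _ => ?_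
          rw [Finset.mul_sum]
          exact Finset.sum_congr rfl fun k _ => by ring
      _ = ∑ i, ∑ k, ∑ τ : Perm' (m+2), F * (∑ p, a i p * c k p) *
            ((∑ j, b j (τ j)) * ((if τ k = i then N else 0) - 1)) := by
          rw [Finset.sum_comm]
          exact Finset.sum_congr rfl fun i _ => Finset.sum_comm
      _ = _ := Finset.sum_congr rfl fun i _ => Finset.sum_congr rfl fun k _ =>
            (Finset.mul_sum _ _ _).symm
  rw [hT]
  have hT2 : (∑ i, ∑ k, F * (∑ p, a i p * c k p) *
        (∑ τ : Perm' (m+2), (∑ j, b j (τ j)) * ((if τ k = i then N else 0) - 1)))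
      = F^2 * N^2 * ∑ i, ∑ k, b k i * (∑ p, a i p * c k p) := by
    rw [Finset.mul_sum]
    refine Finset.sum_congr rfl fun i _ => ?_
    rw [Finset.mul_sum]
    refine Finset.sum_congr rfl fun k _ => ?_
    rw [step2 m b hbrow hbcol i k]
    ring
  rw [hT2]
  -- identify the triple sum
  have hS : (∑ i, ∑ j, ∑ k, b i j * a j k * c i k)
      = ∑ i, ∑ k, b k i * (∑ p, a i p * c k p) := by
    rw [Finset.sum_comm]
    refine Finset.sum_congr rfl fun i _ => ?_
    refine Finset.sum_congr rfl fun k _ => ?_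
    rw [Finset.mul_sum]
    exact Finset.sum_congr rfl fun p _ => by ring
  rw [hS]
  -- final arithmetic
  have hfac : ((m+2).factorial : ℝ) = N * (N - 1) * F := by
    rw [hF, hN, Nat.factorial_succ, Nat.factorial_succ]
    push_cast
    ring
  have hNcast : ((m+2 : ℕ) : ℝ) = N := by rw [hN]; push_cast; ring
  rw [hfac, hNcast]
  have hF0 : F ≠ 0 := by
    rw [hF]
    exact_mod_cast m.factorial_pos.ne'
  have hN1 : N - 1 ≠ 0 := by
    rw [hN]
    have : (0:ℝ) < (m:ℝ) + 1 := by positivity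
    intro hh; nlinarith
  have hN0 : N ≠ 0 := by
    rw [hN]; positivity
  field_simp
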